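/- Let φ : ℝ⁴∖{0} → ℝ⁴, φ(x) = x/|x|², and λ²(x) = 1/|x|⁴. Then for all x ≠ 0: (a) Δ(λ²)(x) = 8/|x|⁶; (b) |Δφ(x)|² = 16/|x|⁶; (c) the vector field T(x) = Σ_α Δφ^α(x)·∇φ^α(x) equals 4x/|x|⁶; and (d) div T(x) = −8/|x|⁶. -/

import Mathlib

noncomputable section

abbrev E (n : ℕ) := EuclideanSpace ℝ (Fin n)

/-- Partial derivative in the `i`-th coordinate direction. -/
def pd {m : ℕ} (u : E m → ℝ) (i : Fin m) : E m → ℝ :=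
  fun x => fderiv ℝ u x (EuclideanSpace.single i 1)

/-- Euclidean Laplacian `Δu = Σᵢ ∂²u/∂xᵢ²`. -/
def lap {m : ℕ} (u : E m → ℝ) : E m → ℝ :=
  fun x => ∑ i, pd (pd u i) i x

/-- Euclidean divergence of a vector field. -/
def div' {m : ℕ} (V : E m → E m) : E m → ℝ :=
  fun x => ∑ i, pd (fun y => V y i) i x

namespace InvAux

variable {m : ℕ}

lemma norm_sq_eq_sum (x : E m) : ‖x‖ ^ 2 = ∑ i, x i ^ 2 := by
  rw [← real_inner_self_eq_norm_sq, PiLp.inner_apply]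
  simp [PiLp.inner_apply, RCLike.inner_apply, sq]

lemma hq (x : E m) : HasFDerivAt (fun y : E m => ‖y‖ ^ 2) ((2:ℝ) • innerSL ℝ x) x := by
  have h := (hasFDerivAt_id x).inner ℝ (hasFDerivAt_id x)
  have h2 : (fun y : E m => @inner ℝ _ _ (id y) (id y)) = fun y : E m => ‖y‖ ^ 2 := by
    funext y; simp only [id]; rw [real_inner_self_eq_norm_sq]
  rw [h2] at h
  convert! h using 1
  ext v
  simp [fderivInnerCLM, real_inner_comm, two_smul, mul_comm]

lemma hqinv (x : E m) (hx : x ≠ 0) (k : ℕ) :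
    HasFDerivAt (fun y : E m => ((‖y‖ ^ 2) ^ (k+1))⁻¹)
      ((-2 * (k+1) * ((‖x‖ ^ 2) ^ (k+2))⁻¹ : ℝ) • innerSL ℝ x) x := by
  have hq0 : (‖x‖ : ℝ) ^ 2 ≠ 0 := pow_ne_zero _ (norm_ne_zero_iff.mpr hx)
  have h1 : HasDerivAt (fun t : ℝ => (t ^ (k+1))⁻¹)
      (-(↑(k+1) * (‖x‖^2) ^ k) / ((‖x‖^2) ^ (k+1)) ^ 2) (‖x‖^2) :=
    (hasDerivAt_pow (k+1) _).inv (pow_ne_zero _ hq0)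
  have h := h1.comp_hasFDerivAt x (hq x)
  convert! h using 1
  ext v
  simp only [ContinuousLinearMap.coe_smul', Pi.smul_apply, smul_smul, smul_eq_mul]
  field_simp
  push_cast
  ring

lemma hqinv1 (x : E m) (hx : x ≠ 0) :
    HasFDerivAt (fun y : E m => (‖y‖ ^ 2)⁻¹)
      ((-2 * ((‖x‖ ^ 2) ^ 2)⁻¹ : ℝ) • innerSL ℝ x) x := by
  have := hqinv x hx 0; norm_num at this ⊢; exact this

lemma hqinv2 (x : E m) (hx : x ≠ 0) :
    HasFDerivAt (fun y : E m => ((‖y‖ ^ 2) ^ 2)⁻¹)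
      ((-4 * ((‖x‖ ^ 2) ^ 3)⁻¹ : ℝ) • innerSL ℝ x) x := by
  have := hqinv x hx 1; norm_num at this ⊢; exact this

lemma hqinv3 (x : E m) (hx : x ≠ 0) :
    HasFDerivAt (fun y : E m => ((‖y‖ ^ 2) ^ 3)⁻¹)
      ((-6 * ((‖x‖ ^ 2) ^ 4)⁻¹ : ℝ) • innerSL ℝ x) x := by
  have := hqinv x hx 2; norm_num at this ⊢; exact this

lemma inner_single (x : E m) (i : Fin m) :
    @inner ℝ _ _ x (EuclideanSpace.single i (1:ℝ)) = x i := by simp [EuclideanSpace.inner_single_right]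

lemma hproj (x : E m) (α : Fin m) :
    HasFDerivAt (fun y : E m => y α) (EuclideanSpace.proj α : E m →L[ℝ] ℝ) x :=
  (EuclideanSpace.proj α : E m →L[ℝ] ℝ).hasFDerivAt

-- first derivative of (‖y‖⁴)⁻¹
lemma pd_f1 (x : E m) (hx : x ≠ 0) (i : Fin m) :
    pd (fun y : E m => (‖y‖ ^ 4)⁻¹) i x = -4 * x i * ((‖x‖ ^ 2) ^ 3)⁻¹ := by
  have hfun : (fun y : E m => (‖y‖ ^ 4)⁻¹) = fun y : E m => ((‖y‖ ^ 2) ^ 2)⁻¹ := by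
    funext y; norm_num [← pow_mul]
  rw [pd, hfun, (hqinv2 x hx).fderiv]
  simp [inner_single]
  ring

-- second derivative of (‖y‖⁴)⁻¹
lemma pd_pd_f1 (x : E m) (hx : x ≠ 0) (i : Fin m) :
    pd (pd (fun y : E m => (‖y‖ ^ 4)⁻¹) i) i x
      = -4 * ((‖x‖ ^ 2) ^ 3)⁻¹ + 24 * x i ^ 2 * ((‖x‖ ^ 2) ^ 4)⁻¹ := by
  have key : pd (fun y : E m => (‖y‖ ^ 4)⁻¹) i =ᶠ[nhds x]
      (fun y : E m => -4 * (y i * ((‖y‖ ^ 2) ^ 3)⁻¹)) := by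
    filter_upwards [isOpen_compl_singleton.mem_nhds hx] with y hy
    have := pd_f1 y hy i
    rw [this]; ring
  have h : HasFDerivAt (fun y : E m => -4 * (y i * ((‖y‖ ^ 2) ^ 3)⁻¹))
      ((-4 : ℝ) • ((x i : ℝ) • ((-6 * ((‖x‖ ^ 2) ^ 4)⁻¹ : ℝ) • innerSL ℝ x)
        + (((‖x‖ ^ 2) ^ 3)⁻¹ : ℝ) • (EuclideanSpace.proj i : E m →L[ℝ] ℝ))) x :=
    ((hproj x i).mul (hqinv3 x hx)).const_mul (-4)
  rw [pd, key.fderiv_eq, h.fderiv]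
  simp [inner_single, EuclideanSpace.single_apply]
  ring

-- first derivative of φ^α
lemma pd_phi (x : E m) (hx : x ≠ 0) (α i : Fin m) :
    pd (fun y : E m => ((‖y‖ ^ 2)⁻¹ • y) α) i x
      = (if α = i then 1 else 0) * (‖x‖ ^ 2)⁻¹ - 2 * x α * x i * ((‖x‖ ^ 2) ^ 2)⁻¹ := by
  have hfun : (fun y : E m => ((‖y‖ ^ 2)⁻¹ • y) α) = fun y : E m => (‖y‖ ^ 2)⁻¹ * y α :=
    funext fun y => rfl
  have h : HasFDerivAt (fun y : E m => (‖y‖ ^ 2)⁻¹ * y α)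
      (((‖x‖ ^ 2)⁻¹ : ℝ) • (EuclideanSpace.proj α : E m →L[ℝ] ℝ)
        + (x α : ℝ) • ((-2 * ((‖x‖ ^ 2) ^ 2)⁻¹ : ℝ) • innerSL ℝ x)) x :=
    (hqinv1 x hx).mul (hproj x α)
  rw [pd, hfun, h.fderiv]
  split_ifs with hc <;>
    simp [hc, inner_single, EuclideanSpace.single_apply, innerSL_apply_apply,
      ContinuousLinearMap.smul_apply, ContinuousLinearMap.add_apply,
      ContinuousLinearMap.sub_apply, ContinuousLinearMap.neg_apply,
      ContinuousLinearMap.zero_apply, ContinuousLinearMap.coe_smul',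
      ContinuousLinearMap.coe_sub', ContinuousLinearMap.coe_add',
      Pi.smul_apply, Pi.sub_apply, Pi.add_apply, Pi.neg_apply, Pi.zero_apply,
      smul_eq_mul] <;> ring

-- second derivative of φ^α
lemma pd_pd_phi (x : E m) (hx : x ≠ 0) (α i : Fin m) :
    pd (pd (fun y : E m => ((‖y‖ ^ 2)⁻¹ • y) α) i) i x
      = (if α = i then -4 * x i * ((‖x‖ ^ 2) ^ 2)⁻¹ else 0)
        - 2 * x α * ((‖x‖ ^ 2) ^ 2)⁻¹ + 8 * x α * x i ^ 2 * ((‖x‖ ^ 2) ^ 3)⁻¹ := by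
  have key : pd (fun y : E m => ((‖y‖ ^ 2)⁻¹ • y) α) i =ᶠ[nhds x]
      (fun y : E m => (if α = i then 1 else 0) * (‖y‖ ^ 2)⁻¹
        - 2 * (y α * y i * ((‖y‖ ^ 2) ^ 2)⁻¹)) := by
    filter_upwards [isOpen_compl_singleton.mem_nhds hx] with y hy
    have := pd_phi y hy α i
    rw [this]; ring
  have h1 : HasFDerivAt (fun y : E m => (if α = i then (1:ℝ) else 0) * (‖y‖ ^ 2)⁻¹)
      ((if α = i then (1:ℝ) else 0) • ((-2 * ((‖x‖ ^ 2) ^ 2)⁻¹ : ℝ) • innerSL ℝ x)) x :=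
    (hqinv1 x hx).const_mul _
  have h2 : HasFDerivAt (fun y : E m => 2 * (y α * y i * ((‖y‖ ^ 2) ^ 2)⁻¹))
      ((2:ℝ) • ((x α * x i : ℝ) • ((-4 * ((‖x‖ ^ 2) ^ 3)⁻¹ : ℝ) • innerSL ℝ x)
        + (((‖x‖ ^ 2) ^ 2)⁻¹ : ℝ) •
          ((x α : ℝ) • (EuclideanSpace.proj i : E m →L[ℝ] ℝ)
            + (x i : ℝ) • (EuclideanSpace.proj α : E m →L[ℝ] ℝ)))) x :=
    (((hproj x α).mul (hproj x i)).mul (hqinv2 x hx)).const_mul 2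
  have h : HasFDerivAt (fun y : E m => (if α = i then (1:ℝ) else 0) * (‖y‖ ^ 2)⁻¹
      - 2 * (y α * y i * ((‖y‖ ^ 2) ^ 2)⁻¹)) _ x := h1.sub h2
  rw [pd, key.fderiv_eq, h.fderiv]
  split_ifs with hc <;>
    simp [hc, inner_single, EuclideanSpace.single_apply, innerSL_apply_apply,
      ContinuousLinearMap.smul_apply, ContinuousLinearMap.add_apply,
      ContinuousLinearMap.sub_apply, ContinuousLinearMap.neg_apply,
      ContinuousLinearMap.zero_apply, ContinuousLinearMap.coe_smul',
      ContinuousLinearMap.coe_sub', ContinuousLinearMap.coe_add',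
      Pi.smul_apply, Pi.sub_apply, Pi.add_apply, Pi.neg_apply, Pi.zero_apply,
      smul_eq_mul] <;> ring

lemma grad_apply (f : E m → ℝ) (x : E m) (i : Fin m) :
    gradient f x i = pd f i x := by
  have h1 : gradient f x i = @inner ℝ _ _ (gradient f x) (EuclideanSpace.single i 1) := by
    rw [EuclideanSpace.inner_single_right]; simp
  rw [h1, gradient, InnerProductSpace.toDual_symm_apply, pd]

lemma lap_phi (x : E 4) (hx : x ≠ 0) (α : Fin 4) :
    lap (fun y : E 4 => ((‖y‖ ^ 2)⁻¹ • y) α) x = -4 * x α * ((‖x‖ ^ 2) ^ 2)⁻¹ := by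
  have hq0 : (‖x‖ : ℝ) ^ 2 ≠ 0 := pow_ne_zero _ (norm_ne_zero_iff.mpr hx)
  rw [lap, Finset.sum_congr rfl fun i _ => pd_pd_phi x hx α i]
  rw [Finset.sum_add_distrib, Finset.sum_sub_distrib]
  have e1 : ∑ i : Fin 4, (if α = i then -4 * x i * ((‖x‖ ^ 2) ^ 2)⁻¹ else 0)
      = -4 * x α * ((‖x‖ ^ 2) ^ 2)⁻¹ := by simp
  have e2 : ∑ _i : Fin 4, 2 * x α * ((‖x‖ ^ 2) ^ 2)⁻¹
      = 8 * x α * ((‖x‖ ^ 2) ^ 2)⁻¹ := by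
    rw [Finset.sum_const]; simp; ring
  have e3 : ∑ i : Fin 4, 8 * x α * x i ^ 2 * ((‖x‖ ^ 2) ^ 3)⁻¹
      = 8 * x α * ((‖x‖ ^ 2) ^ 2)⁻¹ := by
    have : ∑ i : Fin 4, 8 * x α * x i ^ 2 * ((‖x‖ ^ 2) ^ 3)⁻¹
        = 8 * x α * ((‖x‖ ^ 2) ^ 3)⁻¹ * ∑ i : Fin 4, x i ^ 2 := by
      rw [Finset.mul_sum]; exact Finset.sum_congr rfl fun i _ => by ring
    rw [this, ← norm_sq_eq_sum]
    field_simp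
  rw [e1, e2, e3]
  ring

lemma T_apply (y : E 4) (hy : y ≠ 0) (i : Fin 4) :
    (∑ α : Fin 4, lap (fun z : E 4 => ((‖z‖ ^ 2)⁻¹ • z) α) y
        • gradient (fun z : E 4 => ((‖z‖ ^ 2)⁻¹ • z) α) y) i
      = 4 * y i * ((‖y‖ ^ 2) ^ 3)⁻¹ := by
  have hq0 : (‖y‖ : ℝ) ^ 2 ≠ 0 := pow_ne_zero _ (norm_ne_zero_iff.mpr hy)
  rw [WithLp.ofLp_sum, Finset.sum_apply]
  have e : ∀ α : Fin 4,
      (lap (fun z : E 4 => ((‖z‖ ^ 2)⁻¹ • z) α) y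
        • gradient (fun z : E 4 => ((‖z‖ ^ 2)⁻¹ • z) α) y) i
      = (-4 * y α * ((‖y‖ ^ 2) ^ 2)⁻¹) *
        ((if α = i then 1 else 0) * (‖y‖ ^ 2)⁻¹ - 2 * y α * y i * ((‖y‖ ^ 2) ^ 2)⁻¹) := by
    intro α
    have : (lap (fun z : E 4 => ((‖z‖ ^ 2)⁻¹ • z) α) y
        • gradient (fun z : E 4 => ((‖z‖ ^ 2)⁻¹ • z) α) y) i
      = lap (fun z : E 4 => ((‖z‖ ^ 2)⁻¹ • z) α) y
        * (gradient (fun z : E 4 => ((‖z‖ ^ 2)⁻¹ • z) α) y) i := rfl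
    rw [this, lap_phi y hy α, grad_apply, pd_phi y hy α i]
  rw [Finset.sum_congr rfl fun α _ => e α]
  have expand : ∀ α : Fin 4,
      (-4 * y α * ((‖y‖ ^ 2) ^ 2)⁻¹) *
        ((if α = i then 1 else 0) * (‖y‖ ^ 2)⁻¹ - 2 * y α * y i * ((‖y‖ ^ 2) ^ 2)⁻¹)
      = (if α = i then -4 * y α * ((‖y‖ ^ 2) ^ 2)⁻¹ * (‖y‖ ^ 2)⁻¹ else 0)
        + 8 * y i * ((‖y‖ ^ 2) ^ 2)⁻¹ * ((‖y‖ ^ 2) ^ 2)⁻¹ * y α ^ 2 := by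
    intro α; split_ifs <;> ring
  rw [Finset.sum_congr rfl fun α _ => expand α, Finset.sum_add_distrib]
  have e1 : ∑ α : Fin 4, (if α = i then -4 * y α * ((‖y‖ ^ 2) ^ 2)⁻¹ * (‖y‖ ^ 2)⁻¹ else 0)
      = -4 * y i * ((‖y‖ ^ 2) ^ 2)⁻¹ * (‖y‖ ^ 2)⁻¹ := by simp
  have e2 : ∑ α : Fin 4, 8 * y i * ((‖y‖ ^ 2) ^ 2)⁻¹ * ((‖y‖ ^ 2) ^ 2)⁻¹ * y α ^ 2
      = 8 * y i * ((‖y‖ ^ 2) ^ 2)⁻¹ * ((‖y‖ ^ 2) ^ 2)⁻¹ * ‖y‖ ^ 2 := by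
    rw [← Finset.mul_sum, ← norm_sq_eq_sum]
  rw [e1, e2]
  field_simp
  ring

end InvAux

open InvAux in
/-- Basic quantities for the inversion `φ(x) = x/|x|²` on `ℝ⁴∖{0}` with `λ²(x) = 1/|x|⁴`:
(a) `Δ(λ²) = 8/|x|⁶`; (b) `|Δφ|² = 16/|x|⁶`; (c) `T = Σ_α Δφ^α∇φ^α = 4x/|x|⁶`;
(d) `div T = −8/|x|⁶`. -/
theorem inversion_basic_quantities (x : E 4) (hx : x ≠ 0) :
    lap (fun y : E 4 => (‖y‖ ^ 4)⁻¹) x = 8 / ‖x‖ ^ 6 ∧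
    (∑ α : Fin 4, (lap (fun y : E 4 => ((‖y‖ ^ 2)⁻¹ • y) α) x) ^ 2) = 16 / ‖x‖ ^ 6 ∧
    (∀ i : Fin 4,
      (∑ α : Fin 4,
          lap (fun y : E 4 => ((‖y‖ ^ 2)⁻¹ • y) α) x
            • gradient (fun y : E 4 => ((‖y‖ ^ 2)⁻¹ • y) α) x) i
        = 4 * x i / ‖x‖ ^ 6) ∧
    div' (fun y : E 4 =>
        ∑ α : Fin 4,
          lap (fun z : E 4 => ((‖z‖ ^ 2)⁻¹ • z) α) y
            • gradient (fun z : E 4 => ((‖z‖ ^ 2)⁻¹ • z) α) y) x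
      = -8 / ‖x‖ ^ 6 := by
  have hn0 : (‖x‖ : ℝ) ≠ 0 := norm_ne_zero_iff.mpr hx
  have hq0 : (‖x‖ : ℝ) ^ 2 ≠ 0 := pow_ne_zero _ hn0
  refine ⟨?_, ?_, ?_, ?_⟩
  · -- (a)
    rw [lap, Finset.sum_congr rfl fun i _ => pd_pd_f1 x hx i, Finset.sum_add_distrib]
    rw [Finset.sum_const]
    have e3 : ∑ i : Fin 4, 24 * x i ^ 2 * ((‖x‖ ^ 2) ^ 4)⁻¹
        = 24 * ((‖x‖ ^ 2) ^ 4)⁻¹ * ‖x‖ ^ 2 := by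
      have : ∑ i : Fin 4, 24 * x i ^ 2 * ((‖x‖ ^ 2) ^ 4)⁻¹
          = 24 * ((‖x‖ ^ 2) ^ 4)⁻¹ * ∑ i : Fin 4, x i ^ 2 := by
        rw [Finset.mul_sum]; exact Finset.sum_congr rfl fun i _ => by ring
      rw [this, ← norm_sq_eq_sum]
    rw [e3]
    simp only [Finset.card_univ, Fintype.card_fin, nsmul_eq_mul]
    field_simp
    ring
  · -- (b)
    rw [Finset.sum_congr rfl fun α _ => by rw [lap_phi x hx α]]
    have : ∑ α : Fin 4, (-4 * x α * ((‖x‖ ^ 2) ^ 2)⁻¹) ^ 2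
        = 16 * (((‖x‖ ^ 2) ^ 2)⁻¹)^2 * ∑ α : Fin 4, x α ^ 2 := by
      rw [Finset.mul_sum]; exact Finset.sum_congr rfl fun α _ => by ring
    rw [this, ← norm_sq_eq_sum]
    field_simp
  · -- (c)
    intro i
    rw [T_apply x hx i, show ((‖x‖:ℝ) ^ 2) ^ 3 = ‖x‖ ^ 6 by ring, div_eq_mul_inv]
  · -- (d)
    rw [div']
    have key : ∀ i : Fin 4,
        pd (fun y : E 4 =>
          (∑ α : Fin 4, lap (fun z : E 4 => ((‖z‖ ^ 2)⁻¹ • z) α) y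
            • gradient (fun z : E 4 => ((‖z‖ ^ 2)⁻¹ • z) α) y) i) i x
        = 4 * ((‖x‖ ^ 2) ^ 3)⁻¹ - 24 * x i ^ 2 * ((‖x‖ ^ 2) ^ 4)⁻¹ := by
      intro i
      have keyf : (fun y : E 4 =>
          (∑ α : Fin 4, lap (fun z : E 4 => ((‖z‖ ^ 2)⁻¹ • z) α) y
            • gradient (fun z : E 4 => ((‖z‖ ^ 2)⁻¹ • z) α) y) i) =ᶠ[nhds x]
          (fun y : E 4 => 4 * (y i * ((‖y‖ ^ 2) ^ 3)⁻¹)) := by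
        filter_upwards [isOpen_compl_singleton.mem_nhds hx] with y hy
        rw [T_apply y hy i]; ring
      have h : HasFDerivAt (fun y : E 4 => 4 * (y i * ((‖y‖ ^ 2) ^ 3)⁻¹))
          ((4 : ℝ) • ((x i : ℝ) • ((-6 * ((‖x‖ ^ 2) ^ 4)⁻¹ : ℝ) • innerSL ℝ x)
            + (((‖x‖ ^ 2) ^ 3)⁻¹ : ℝ) • (EuclideanSpace.proj i : E 4 →L[ℝ] ℝ))) x :=
        ((hproj x i).mul (hqinv3 x hx)).const_mul 4
      rw [pd, keyf.fderiv_eq, h.fderiv]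
      simp [inner_single, EuclideanSpace.single_apply]
      ring
    rw [Finset.sum_congr rfl fun i _ => key i, Finset.sum_sub_distrib, Finset.sum_const]
    have e3 : ∑ i : Fin 4, 24 * x i ^ 2 * ((‖x‖ ^ 2) ^ 4)⁻¹
        = 24 * ((‖x‖ ^ 2) ^ 4)⁻¹ * ‖x‖ ^ 2 := by
      have : ∑ i : Fin 4, 24 * x i ^ 2 * ((‖x‖ ^ 2) ^ 4)⁻¹
          = 24 * ((‖x‖ ^ 2) ^ 4)⁻¹ * ∑ i : Fin 4, x i ^ 2 := by
        rw [Finset.mul_sum]; exact Finset.sum_congr rfl fun i _ => by ring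
      rw [this, ← norm_sq_eq_sum]
    rw [e3]
    simp only [Finset.card_univ, Fintype.card_fin, nsmul_eq_mul]
    field_simp
    ring

end
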